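/- Let (b_p)_{p ≥ -1} be a nonnegative sequence such that ∑_{p} 2^p b_p < ∞ and 2^Q b_Q → 0 as Q → ∞. Then lim_{Q → ∞} ∑_{p ≥ -1} 2^{-|p-Q|/2} 2^p b_p = 0. -/

import Mathlib

open Filter

private lemma geom_summable : Summable (fun k : ℤ => (2 : ℝ) ^ (-(|(k : ℝ)|) / 2)) := by
  have hr0 : (0:ℝ) ≤ (2:ℝ) ^ (-(1:ℝ)/2) := Real.rpow_nonneg (by norm_num) _
  have hr1 : (2:ℝ) ^ (-(1:ℝ)/2) < 1 :=
    Real.rpow_lt_one_of_one_lt_of_neg (by norm_num) (by norm_num)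
  have key : ∀ k : ℤ, (2:ℝ) ^ (-(|(k : ℝ)|) / 2) = ((2:ℝ) ^ (-(1:ℝ)/2)) ^ (k.natAbs) := by
    intro k
    rw [← Real.rpow_natCast ((2:ℝ) ^ (-(1:ℝ)/2)), ← Real.rpow_mul (by norm_num)]
    congr 1
    have : ((k.natAbs : ℕ) : ℝ) = |(k : ℝ)| := by
      rw [Nat.cast_natAbs]; push_cast; ring
    rw [← this]; ring
  have hgeom := summable_geometric_of_lt_one hr0 hr1
  apply Summable.of_nat_of_neg
  · exact hgeom.congr fun n => by rw [key]; simp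
  · exact hgeom.congr fun n => by rw [key]; simp

set_option maxHeartbeats 1000000 in
/-- If `(b_p)_{p ≥ -1}` is nonnegative with `∑_p 2^p b_p < ∞` and `2^Q b_Q → 0`, then
`∑_{p ≥ -1} 2^{-|p-Q|/2} 2^p b_p → 0` as `Q → ∞`. -/
theorem stmt_3 (b : ℤ → ℝ) (hb : ∀ p, 0 ≤ b p)
    (hsum : Summable fun p : {p : ℤ // -1 ≤ p} => (2 : ℝ) ^ (((p : ℤ) : ℝ)) * b p)
    (hlim : Tendsto (fun Q : ℤ => (2 : ℝ) ^ ((Q : ℝ)) * b Q) atTop (nhds 0)) :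
    Tendsto (fun Q : ℤ =>
        ∑' p : {p : ℤ // -1 ≤ p},
          (2 : ℝ) ^ (-(|((p : ℤ) : ℝ) - (Q : ℝ)|) / 2) * (2 : ℝ) ^ (((p : ℤ) : ℝ)) * b p)
      atTop (nhds 0) := by
  set g : ℤ → ℝ := fun k => (2 : ℝ) ^ (-(|(k : ℝ)|) / 2) with hg_def
  have hg : Summable g := geom_summable
  set a : {p : ℤ // -1 ≤ p} → ℝ := fun p => (2 : ℝ) ^ (((p : ℤ) : ℝ)) * b p with ha_def
  set w : ℤ → {p : ℤ // -1 ≤ p} → ℝ :=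
    fun Q p => (2 : ℝ) ^ (-(|((p : ℤ) : ℝ) - (Q : ℝ)|) / 2) with hw_def
  have ha : ∀ p, 0 ≤ a p := fun p => mul_nonneg (Real.rpow_nonneg (by norm_num) _) (hb _)
  have hw0 : ∀ Q p, 0 ≤ w Q p := fun Q p => Real.rpow_nonneg (by norm_num) _
  have hw1 : ∀ Q p, w Q p ≤ 1 := fun Q p =>
    Real.rpow_le_one_of_one_le_of_nonpos (by norm_num)
      (by have := abs_nonneg (((p : ℤ) : ℝ) - (Q : ℝ)); linarith)
  have hwg : ∀ (Q : ℤ) (p : {p : ℤ // -1 ≤ p}), w Q p = g ((p : ℤ) - Q) := by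
    intro Q p
    simp only [hw_def, hg_def]
    congr 2
    push_cast
    ring
  -- summability of the weights over the subtype
  have hgQ : ∀ Q : ℤ, Summable (fun k : ℤ => g (k - Q)) := fun Q =>
    (Equiv.subRight Q).summable_iff.mpr hg
  have hws : ∀ Q : ℤ, Summable (fun p : {p : ℤ // -1 ≤ p} => w Q p) := by
    intro Q
    have := (hgQ Q).subtype {p : ℤ | -1 ≤ p}
    exact this.congr fun p => (hwg Q p).symm
  -- the weighted sums are summable
  have hfs : ∀ Q : ℤ, Summable (fun p : {p : ℤ // -1 ≤ p} => w Q p * a p) := by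
    intro Q
    exact Summable.of_nonneg_of_le (fun p => mul_nonneg (hw0 Q p) (ha p))
      (fun p => mul_le_of_le_one_left (ha p) (hw1 Q p)) hsum
  set C : ℝ := ∑' k : ℤ, g k with hC_def
  have hC1 : (1 : ℝ) ≤ C := by
    have := Summable.le_tsum hg 0 (fun j _ => Real.rpow_nonneg (by norm_num) _)
    simpa [hg_def] using this
  have hCpos : (0 : ℝ) < C := lt_of_lt_of_le one_pos hC1
  have htw : ∀ Q : ℤ, ∑' p : {p : ℤ // -1 ≤ p}, w Q p ≤ C := by
    intro Q
    have h1 : ∑' p : {p : ℤ // -1 ≤ p}, w Q p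
        = ∑' p : ({p : ℤ | -1 ≤ p} : Set ℤ), g ((p : ℤ) - Q) :=
      tsum_congr fun p => hwg Q p
    have h2 : ∑' p : ({p : ℤ | -1 ≤ p} : Set ℤ), g ((p : ℤ) - Q) ≤ ∑' k : ℤ, g (k - Q) :=
      Summable.tsum_subtype_le (fun k : ℤ => g (k - Q)) _
        (fun k => Real.rpow_nonneg (by norm_num) _) (hgQ Q)
    have h3 : ∑' k : ℤ, g (k - Q) = C := (Equiv.subRight Q).tsum_eq g
    rw [h1, ← h3]; exact h2
  set S : ℝ := ∑' p : {p : ℤ // -1 ≤ p}, a p with hS_def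
  -- reduce to ε-form
  have hgoal : ∀ Q : ℤ,
      (∑' p : {p : ℤ // -1 ≤ p},
        (2 : ℝ) ^ (-(|((p : ℤ) : ℝ) - (Q : ℝ)|) / 2) * (2 : ℝ) ^ (((p : ℤ) : ℝ)) * b p)
      = ∑' p : {p : ℤ // -1 ≤ p}, w Q p * a p := by
    intro Q; exact tsum_congr fun p => by rw [hw_def, ha_def]; ring
  simp only [hgoal]
  rw [NormedAddCommGroup.tendsto_nhds_zero]
  intro ε hε
  have hε' : 0 < ε / (2 * C) := div_pos hε (by positivity)
  rw [NormedAddCommGroup.tendsto_nhds_zero] at hlim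
  obtain ⟨M, hM⟩ := (eventually_atTop.mp (hlim _ hε'))
  set N : ℤ := max M 0 with hN_def
  -- the key bound for Q ≥ N
  have hbound : ∀ Q : ℤ, N ≤ Q →
      (∑' p : {p : ℤ // -1 ≤ p}, w Q p * a p)
        ≤ (2 : ℝ) ^ (((N : ℝ) - (Q : ℝ)) / 2) * S + (ε / (2 * C)) * C := by
    intro Q hQ
    have hterm : ∀ p : {p : ℤ // -1 ≤ p},
        w Q p * a p ≤ (2 : ℝ) ^ (((N : ℝ) - (Q : ℝ)) / 2) * a p + (ε / (2 * C)) * w Q p := by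
      intro p
      by_cases hp : (p : ℤ) ≤ N
      · have hpr : ((p : ℤ) : ℝ) ≤ (N : ℝ) := by exact_mod_cast hp
        have habs : (Q : ℝ) - (N : ℝ) ≤ |((p : ℤ) : ℝ) - (Q : ℝ)| := by
          have := neg_le_abs (((p : ℤ) : ℝ) - (Q : ℝ))
          linarith
        have hwle : w Q p ≤ (2 : ℝ) ^ (((N : ℝ) - (Q : ℝ)) / 2) := by
          rw [hw_def]
          exact Real.rpow_le_rpow_of_exponent_le (by norm_num) (by linarith)
        have : w Q p * a p ≤ (2 : ℝ) ^ (((N : ℝ) - (Q : ℝ)) / 2) * a p :=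
          mul_le_mul_of_nonneg_right hwle (ha p)
        have hnn : 0 ≤ (ε / (2 * C)) * w Q p := mul_nonneg hε'.le (hw0 Q p)
        linarith
      · push_neg at hp
        have hMp : M ≤ (p : ℤ) := le_trans (le_trans (le_max_left M 0) (le_of_lt hp)) le_rfl
        have := hM (p : ℤ) hMp
        have hale : a p ≤ ε / (2 * C) := by
          rw [Real.norm_eq_abs, abs_of_nonneg (ha p)] at this
          exact this.le
        have : w Q p * a p ≤ (ε / (2 * C)) * w Q p := by
          rw [mul_comm (ε / (2 * C)) (w Q p)]
          exact mul_le_mul_of_nonneg_left hale (hw0 Q p)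
        have hnn : 0 ≤ (2 : ℝ) ^ (((N : ℝ) - (Q : ℝ)) / 2) * a p :=
          mul_nonneg (Real.rpow_nonneg (by norm_num) _) (ha p)
        linarith
    calc (∑' p : {p : ℤ // -1 ≤ p}, w Q p * a p)
        ≤ ∑' p : {p : ℤ // -1 ≤ p},
            ((2 : ℝ) ^ (((N : ℝ) - (Q : ℝ)) / 2) * a p + (ε / (2 * C)) * w Q p) :=
          Summable.tsum_le_tsum hterm (hfs Q) ((hsum.mul_left _).add ((hws Q).mul_left _))
      _ = (2 : ℝ) ^ (((N : ℝ) - (Q : ℝ)) / 2) * S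
            + (ε / (2 * C)) * ∑' p : {p : ℤ // -1 ≤ p}, w Q p := by
          rw [Summable.tsum_add (hsum.mul_left _) ((hws Q).mul_left _), tsum_mul_left, tsum_mul_left]
      _ ≤ (2 : ℝ) ^ (((N : ℝ) - (Q : ℝ)) / 2) * S + (ε / (2 * C)) * C := by
          have := mul_le_mul_of_nonneg_left (htw Q) hε'.le
          linarith
  -- the first part tends to 0
  have h3 : Tendsto (fun Q : ℤ => (2 : ℝ) ^ (((N : ℝ) - (Q : ℝ)) / 2) * S) atTop (nhds 0) := by
    have hr0 : (-1 : ℝ) < (2:ℝ) ^ (-(1:ℝ)/2) :=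
      lt_of_lt_of_le (by norm_num) (Real.rpow_nonneg (by norm_num) _)
    have hr1 : (2:ℝ) ^ (-(1:ℝ)/2) < 1 :=
      Real.rpow_lt_one_of_one_lt_of_neg (by norm_num) (by norm_num)
    have h4 : Tendsto (fun Q : ℤ => ((Q : ℝ) - (N : ℝ))) atTop atTop :=
      tendsto_atTop_add_const_right _ _ tendsto_intCast_atTop_atTop
    have h5 := ((tendsto_rpow_atTop_of_base_lt_one _ hr0 hr1).comp h4).mul_const S
    rw [zero_mul] at h5
    refine h5.congr fun Q => ?_
    simp only [Function.comp]
    rw [← Real.rpow_mul (by norm_num : (0:ℝ) ≤ 2)]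
    congr 2
    ring
  have h5 : ∀ᶠ Q : ℤ in atTop, (2 : ℝ) ^ (((N : ℝ) - (Q : ℝ)) / 2) * S < ε / 2 :=
    h3.eventually_lt_const (by linarith)
  filter_upwards [h5, eventually_ge_atTop N] with Q h5Q hNQ
  have hnn : 0 ≤ ∑' p : {p : ℤ // -1 ≤ p}, w Q p * a p :=
    tsum_nonneg fun p => mul_nonneg (hw0 Q p) (ha p)
  rw [Real.norm_eq_abs, abs_of_nonneg hnn]
  have := hbound Q hNQ
  have hεC : (ε / (2 * C)) * C = ε / 2 := by field_simp
  rw [hεC] at this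
  linarith
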